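/- Let m1, m2 be nonnegative integers, let ū be a tuple of m1 complex numbers, v̄ a tuple of m2 complex numbers, and w̄ a tuple of m1+m2 pairwise distinct complex numbers, all parameters generic so that every denominator below is nonzero. Then the sum over all partitions of w̄ into disjoint subsets w̄_α of cardinality m1 and w̄_ᾱ of cardinality m2 satisfies: Σ g(w̄_α,ū)·g(w̄_ᾱ,v̄)·g(w̄_ᾱ,w̄_α) = g(w̄,ū)·g(w̄,v̄)/g(ū,v̄). -/

import Mathlib

open scoped BigOperators

/-- The rational function `g(x,y) = c/(x-y)`. -/
noncomputable def gG (c x y : ℂ) : ℂ := c / (x - y)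

/-- The rational function `f(x,y) = (x-y+c)/(x-y)`. -/
noncomputable def fF (c x y : ℂ) : ℂ := (x - y + c) / (x - y)

/-- The rational function `h(x,y) = (x-y+c)/c`. -/
noncomputable def hH (c x y : ℂ) : ℂ := (x - y + c) / c

/-- A two-argument function applied to tuples denotes the product over all elements. -/
noncomputable def pF (F : ℂ → ℂ → ℂ) (U V : List ℂ) : ℂ :=
  (U.map fun x => (V.map fun y => F x y).prod).prod

/-- The domain-wall partition function `K(ū|v̄) = Δ'(ū)·Δ(v̄)·h(ū,v̄)·det(g(u_j,v_k)/h(u_j,v_k))`,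
written in the equivalent (rational-continuation) form in which the prefactor `h(ū,v̄)` is
distributed over the rows of the determinant:
`K(ū|v̄) = Δ'(ū)·Δ(v̄)·det( g(u_j,v_k)·∏_{k'≠k} h(u_j,v_{k'}) )`.
For tuples of equal length `n` with all denominators nonzero this coincides with the literal
formula, and `K(∅|∅) = 1`. -/
noncomputable def Kd (c : ℂ) (U V : List ℂ) : ℂ :=
  (∏ j : Fin U.length, ∏ k : Fin U.length,
      if (j : ℕ) < (k : ℕ) then gG c (U.get j) (U.get k) else 1) *
  (∏ j : Fin V.length, ∏ k : Fin V.length,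
      if (k : ℕ) < (j : ℕ) then gG c (V.get j) (V.get k) else 1) *
  Matrix.det (Matrix.of fun j k : Fin U.length =>
    gG c (U.get j) (V.getD (k : ℕ) 0) *
      ∏ k' : Fin U.length, if k' = k then 1 else hH c (U.get j) (V.getD (k' : ℕ) 0))

/-- The sub-tuple of a tuple `L` selected by a set `A` of positions (in increasing order). -/
noncomputable def subL (L : List ℂ) (A : Finset (Fin L.length)) : List ℂ :=
  (A.sort (· ≤ ·)).map L.get

/-- Genericity of a family of parameters: all members are pairwise distinct and no difference
of two members equals `±c`, so that every denominator occurring (also after shifts by `±c`)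
is nonzero. -/
def Generic (c : ℂ) (L : List ℂ) : Prop :=
  L.Pairwise fun x y => x ≠ y ∧ x - y ≠ c ∧ x - y ≠ -c

open Polynomial Finset


/-- `Qq S z = ∏_{s∈S} (z - s)`. -/
private noncomputable def Qq (S : Finset ℂ) (z : ℂ) : ℂ := ∏ s ∈ S, (z - s)

/-- `dd B A = ∏_{b∈B} ∏_{a∈A} (b - a)`. -/
private noncomputable def dd (B A : Finset ℂ) : ℂ := ∏ b ∈ B, ∏ a ∈ A, (b - a)

/-- The summand of the core identity. -/
private noncomputable def sm (U V W A : Finset ℂ) : ℂ :=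
  (∏ a ∈ A, Qq V a) * (∏ b ∈ W \ A, Qq U b) * (dd (W \ A) A)⁻¹

private noncomputable def PP (S : Finset ℂ) : ℂ[X] := ∏ s ∈ S, (X - C s)

private lemma evalPP (S : Finset ℂ) (z : ℂ) : (PP S).eval z = Qq S z := by
  simp [PP, Qq, eval_prod]

private lemma natDegree_PP_le (S : Finset ℂ) : (PP S).natDegree ≤ S.card := by
  refine (Polynomial.natDegree_prod_le _ _).trans ?_
  simp [natDegree_X_sub_C]

private lemma Qq_ne_zero {S : Finset ℂ} {z : ℂ} (h : z ∉ S) : Qq S z ≠ 0 := by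
  rw [Qq, Finset.prod_ne_zero_iff]
  exact fun s hs => sub_ne_zero.2 fun e => h (e ▸ hs)

private lemma dd_ne_zero {B A : Finset ℂ} (h : ∀ b ∈ B, ∀ a ∈ A, b ≠ a) : dd B A ≠ 0 := by
  rw [dd, Finset.prod_ne_zero_iff]
  intro b hb
  rw [Finset.prod_ne_zero_iff]
  exact fun a ha => sub_ne_zero.2 (h b hb a ha)

private lemma prod_sub_comm (S : Finset ℂ) (z : ℂ) :
    ∏ b ∈ S, (b - z) = (-1) ^ S.card * Qq S z := by
  rw [Qq, ← Finset.prod_const, ← Finset.prod_mul_distrib]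
  exact Finset.prod_congr rfl fun b _ => by ring

private lemma dd_eq_prod_Qq (B A : Finset ℂ) : dd B A = ∏ b ∈ B, Qq A b := rfl

private lemma Qq_sdiff {A S : Finset ℂ} (h : A ⊆ S) (z : ℂ) :
    Qq (S \ A) z * Qq A z = Qq S z := Finset.prod_sdiff h

private lemma dd_insert_right {B A : Finset ℂ} {a : ℂ} (ha : a ∉ A) :
    dd B (insert a A) = (∏ b ∈ B, (b - a)) * dd B A := by
  rw [dd, dd, ← Finset.prod_mul_distrib]
  exact Finset.prod_congr rfl fun b _ => Finset.prod_insert ha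

private lemma dd_insert_left {B A : Finset ℂ} {b : ℂ} (hb : b ∉ B) :
    dd (insert b B) A = (∏ a ∈ A, (b - a)) * dd B A := by
  rw [dd, dd, Finset.prod_insert hb]

private lemma step (U V W' : Finset ℂ) (x : ℂ) (hx : x ∉ W') (hdisj : Disjoint U V)
    (hUne : U.Nonempty) (hVne : V.Nonempty)
    (hcard : W'.card + 1 = U.card + V.card)
    (ihU : ∀ u ∈ U,
      ∑ A ∈ Finset.powersetCard (U.card - 1) W', sm (U.erase u) V W' A = dd (U.erase u) V)
    (ihV : ∀ v ∈ V,
      ∑ A ∈ Finset.powersetCard U.card W', sm U (V.erase v) W' A = dd U (V.erase v)) :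
    ∑ A ∈ Finset.powersetCard U.card (insert x W'), sm U V (insert x W') A = dd U V := by
  obtain ⟨kk, hkk⟩ : ∃ kk, U.card = kk + 1 :=
    ⟨U.card - 1, by have := Finset.card_pos.2 hUne; omega⟩
  have hm2 : 0 < V.card := Finset.card_pos.2 hVne
  have hW'c : W'.card = kk + V.card := by omega
  set G : ℂ[X] :=
    C ((-1 : ℂ) ^ V.card) *
        (∑ A ∈ Finset.powersetCard kk W', C (sm U V W' A) * (PP V * PP A)) +
      (∑ A ∈ Finset.powersetCard U.card W', C (sm U V W' A) * (PP U * PP (W' \ A))) -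
      C (dd U V) * PP W' with hGdef
  have hGeval : ∀ z : ℂ, G.eval z =
      (-1 : ℂ) ^ V.card *
          (∑ A ∈ Finset.powersetCard kk W', sm U V W' A * (Qq V z * Qq A z)) +
        (∑ A ∈ Finset.powersetCard U.card W', sm U V W' A * (Qq U z * Qq (W' \ A) z)) -
        dd U V * Qq W' z := by
    intro z
    rw [hGdef]
    simp only [eval_add, eval_sub, eval_mul, eval_C, eval_finset_sum, evalPP]
  -- degree bound
  have hterm : ∀ (c : ℂ) (S T : Finset ℂ), (C c * (PP S * PP T)).natDegree ≤ S.card + T.card := by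
    intro c S T
    calc (C c * (PP S * PP T)).natDegree
        ≤ (C c).natDegree + (PP S * PP T).natDegree := natDegree_mul_le
      _ ≤ 0 + ((PP S).natDegree + (PP T).natDegree) :=
          add_le_add (natDegree_C _).le natDegree_mul_le
      _ ≤ 0 + (S.card + T.card) :=
          add_le_add le_rfl (add_le_add (natDegree_PP_le S) (natDegree_PP_le T))
      _ = S.card + T.card := zero_add _
  have hdeg : G.natDegree ≤ W'.card := by
    rw [hGdef]
    refine (natDegree_sub_le _ _).trans (max_le ((natDegree_add_le _ _).trans (max_le ?_ ?_)) ?_)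
    · refine natDegree_mul_le.trans ?_
      rw [natDegree_C, zero_add]
      refine Polynomial.natDegree_sum_le_of_forall_le _ _ ?_
      intro A hA
      obtain ⟨hAs, hAc⟩ := Finset.mem_powersetCard.1 hA
      refine (hterm _ _ _).trans ?_
      rw [hAc]; omega
    · refine Polynomial.natDegree_sum_le_of_forall_le _ _ ?_
      intro A hA
      obtain ⟨hAs, hAc⟩ := Finset.mem_powersetCard.1 hA
      have hsd : (W' \ A).card = W'.card - U.card := by rw [Finset.card_sdiff_of_subset hAs, hAc]
      refine (hterm _ _ _).trans ?_
      rw [hsd]; omega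
    · calc (C (dd U V) * PP W').natDegree
          ≤ (C (dd U V)).natDegree + (PP W').natDegree := natDegree_mul_le
        _ ≤ 0 + W'.card := add_le_add (natDegree_C _).le (natDegree_PP_le W')
        _ = W'.card := zero_add _
  -- vanishing at points of U and V
  have heval : ∀ z ∈ U ∪ V, G.eval z = 0 := by
    intro z hz
    rcases Finset.mem_union.1 hz with hu | hv
    · -- z ∈ U
      have hQU0 : Qq U z = 0 := Finset.prod_eq_zero hu (sub_self z)
      have hsum2 : ∑ A ∈ Finset.powersetCard U.card W',
          sm U V W' A * (Qq U z * Qq (W' \ A) z) = 0 :=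
        Finset.sum_eq_zero fun A _ => by rw [hQU0]; ring
      have key : ∀ A ∈ Finset.powersetCard kk W',
          sm U V W' A * (Qq V z * Qq A z)
            = sm (U.erase z) V W' A * (Qq V z * Qq W' z * (-1 : ℂ) ^ V.card) := by
        intro A hA
        obtain ⟨hAs, hAc⟩ := Finset.mem_powersetCard.1 hA
        have hsd : (W' \ A).card = V.card := by
          rw [Finset.card_sdiff_of_subset hAs, hAc, hW'c]; omega
        have e1 : ∀ b : ℂ, Qq U b = (b - z) * Qq (U.erase z) b := fun b => by
          rw [Qq, Qq, ← Finset.mul_prod_erase U _ hu]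
        have e2 : (∏ b ∈ W' \ A, Qq U b)
            = ((-1 : ℂ) ^ V.card * Qq (W' \ A) z) * ∏ b ∈ W' \ A, Qq (U.erase z) b := by
          rw [Finset.prod_congr rfl fun b _ => e1 b, Finset.prod_mul_distrib,
            prod_sub_comm, hsd]
        rw [sm, sm, e2, ← Qq_sdiff hAs z]
        ring
      have hs1 : ∑ A ∈ Finset.powersetCard kk W', sm U V W' A * (Qq V z * Qq A z)
          = dd (U.erase z) V * (Qq V z * Qq W' z * (-1 : ℂ) ^ V.card) := by
        rw [Finset.sum_congr rfl key, ← Finset.sum_mul]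
        have h := ihU z hu
        rw [show U.card - 1 = kk from by omega] at h
        rw [h]
      have hdd : dd U V = Qq V z * dd (U.erase z) V := by
        rw [dd_eq_prod_Qq, dd_eq_prod_Qq, ← Finset.mul_prod_erase U _ hu]
      have h11 : ((-1 : ℂ)) ^ V.card * (-1 : ℂ) ^ V.card = 1 := by
        rw [← pow_add, ← two_mul, pow_mul]; norm_num
      rw [hGeval z, hs1, hsum2, hdd]
      linear_combination Qq V z * dd (U.erase z) V * Qq W' z * h11
    · -- z ∈ V
      have hQV0 : Qq V z = 0 := Finset.prod_eq_zero hv (sub_self z)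
      have hsum1 : ∑ A ∈ Finset.powersetCard kk W',
          sm U V W' A * (Qq V z * Qq A z) = 0 :=
        Finset.sum_eq_zero fun A _ => by rw [hQV0]; ring
      have e1 : ∀ a : ℂ, Qq V a = (a - z) * Qq (V.erase z) a := fun a => by
        rw [Qq, Qq, ← Finset.mul_prod_erase V _ hv]
      have key : ∀ A ∈ Finset.powersetCard U.card W',
          sm U V W' A * (Qq U z * Qq (W' \ A) z)
            = sm U (V.erase z) W' A * (Qq U z * Qq W' z * (-1 : ℂ) ^ U.card) := by
        intro A hA
        obtain ⟨hAs, hAc⟩ := Finset.mem_powersetCard.1 hA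
        have e2 : (∏ a ∈ A, Qq V a)
            = ((-1 : ℂ) ^ U.card * Qq A z) * ∏ a ∈ A, Qq (V.erase z) a := by
          rw [Finset.prod_congr rfl fun a _ => e1 a, Finset.prod_mul_distrib,
            prod_sub_comm, hAc]
        rw [sm, sm, e2, ← Qq_sdiff hAs z]
        ring
      have hs2 : ∑ A ∈ Finset.powersetCard U.card W',
          sm U V W' A * (Qq U z * Qq (W' \ A) z)
          = dd U (V.erase z) * (Qq U z * Qq W' z * (-1 : ℂ) ^ U.card) := by
        rw [Finset.sum_congr rfl key, ← Finset.sum_mul, ihV z hv]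
      have hdd : dd U V = ((-1 : ℂ) ^ U.card * Qq U z) * dd U (V.erase z) := by
        rw [dd_eq_prod_Qq, dd_eq_prod_Qq, Finset.prod_congr rfl fun b _ => e1 b,
          Finset.prod_mul_distrib, prod_sub_comm]
      rw [hGeval z, hsum1, hs2, hdd]
      ring
  have hG0 : G = 0 := by
    refine Polynomial.eq_zero_of_natDegree_lt_card_of_eval_eq_zero' G (U ∪ V) heval ?_
    rw [Finset.card_union_of_disjoint hdisj]
    omega
  -- evaluation at x
  have hx' : Qq W' x ≠ 0 := Qq_ne_zero hx
  have hmain := hGeval x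
  rw [hG0, eval_zero] at hmain
  -- split the sum on the goal
  have hdisjsets : Disjoint (Finset.powersetCard (kk + 1) W')
      ((Finset.powersetCard kk W').image (insert x)) := by
    rw [Finset.disjoint_left]
    intro A hA hA2
    obtain ⟨A', hA', rfl⟩ := Finset.mem_image.1 hA2
    exact hx ((Finset.mem_powersetCard.1 hA).1 (Finset.mem_insert_self x A'))
  have hinj : ∀ A ∈ Finset.powersetCard kk W', ∀ B ∈ Finset.powersetCard kk W',
      insert x A = insert x B → A = B := by
    intro A hA B hB h
    have hxA : x ∉ A := fun hxa => hx ((Finset.mem_powersetCard.1 hA).1 hxa)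
    have hxB : x ∉ B := fun hxb => hx ((Finset.mem_powersetCard.1 hB).1 hxb)
    rw [← Finset.erase_insert hxA, ← Finset.erase_insert hxB, h]
  have c2a : ∀ A ∈ Finset.powersetCard (kk + 1) W',
      sm U V (insert x W') A * Qq W' x = sm U V W' A * (Qq U x * Qq (W' \ A) x) := by
    intro A hA
    obtain ⟨hAs, hAc⟩ := Finset.mem_powersetCard.1 hA
    have hxA : x ∉ A := fun h => hx (hAs h)
    have hWd : insert x W' \ A = insert x (W' \ A) := Finset.insert_sdiff_of_notMem W' hxA
    have hxWA : x ∉ W' \ A := fun h => hx (Finset.mem_sdiff.1 h).1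
    have hQAx : Qq A x ≠ 0 := Qq_ne_zero hxA
    rw [sm, sm, hWd, Finset.prod_insert hxWA, dd_insert_left hxWA,
      show (∏ a ∈ A, (x - a)) = Qq A x from rfl, ← Qq_sdiff hAs x, mul_inv]
    have h1 : (Qq A x)⁻¹ * Qq A x = 1 := inv_mul_cancel₀ hQAx
    linear_combination ((∏ a ∈ A, Qq V a) * (∏ b ∈ W' \ A, Qq U b) *
      (dd (W' \ A) A)⁻¹ * Qq U x * Qq (W' \ A) x) * h1
  have c2b : ∀ A ∈ Finset.powersetCard kk W',
      sm U V (insert x W') (insert x A) * Qq W' x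
        = sm U V W' A * (Qq V x * Qq A x) * (-1 : ℂ) ^ V.card := by
    intro A hA
    obtain ⟨hAs, hAc⟩ := Finset.mem_powersetCard.1 hA
    have hxA : x ∉ A := fun h => hx (hAs h)
    have hxWA : x ∉ W' \ A := fun h => hx (Finset.mem_sdiff.1 h).1
    have hWd : insert x W' \ insert x A = W' \ A := by
      rw [Finset.insert_sdiff_insert, Finset.sdiff_insert,
        Finset.erase_eq_of_notMem hxWA]
    have hQx : Qq (W' \ A) x ≠ 0 := Qq_ne_zero hxWA
    have hsd : (W' \ A).card = V.card := by
      rw [Finset.card_sdiff_of_subset hAs, hAc, hW'c]; omega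
    rw [sm, sm, hWd, Finset.prod_insert hxA, dd_insert_right hxA, prod_sub_comm, hsd,
      ← Qq_sdiff hAs x, mul_inv, mul_inv]
    have h2 : ((-1 : ℂ) ^ V.card)⁻¹ = (-1 : ℂ) ^ V.card := by
      rw [← inv_pow]; norm_num
    rw [h2]
    have h1 : (Qq (W' \ A) x)⁻¹ * Qq (W' \ A) x = 1 := inv_mul_cancel₀ hQx
    linear_combination (Qq V x * (∏ a ∈ A, Qq V a) * (∏ b ∈ W' \ A, Qq U b) *
      (-1 : ℂ) ^ V.card * (dd (W' \ A) A)⁻¹ * Qq A x) * h1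
  refine mul_right_cancel₀ hx' ?_
  rw [hkk, Finset.powersetCard_succ_insert hx, Finset.sum_union hdisjsets,
    Finset.sum_image hinj, add_mul, Finset.sum_mul, Finset.sum_mul,
    Finset.sum_congr rfl c2a, Finset.sum_congr rfl c2b, ← Finset.sum_mul]
  rw [show kk + 1 = U.card from hkk.symm] at *
  linear_combination -hmain

private theorem core (n : ℕ) : ∀ U V W : Finset ℂ, Disjoint U V →
    W.card = U.card + V.card → W.card = n →
    ∑ A ∈ Finset.powersetCard U.card W, sm U V W A = dd U V := by
  induction n using Nat.strong_induction_on with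
  | _ n ih =>
  intro U V W hdisj hcard hn
  rcases U.eq_empty_or_nonempty with rfl | hUne
  · simp [sm, dd, Qq]
  rcases V.eq_empty_or_nonempty with rfl | hVne
  · rw [Finset.card_empty, add_zero] at hcard
    rw [← hcard, Finset.powersetCard_self, Finset.sum_singleton]
    simp [sm, dd, Qq]
  · have hWne : W.Nonempty := by
      rw [← Finset.card_pos, hcard]
      have := Finset.card_pos.2 hUne; omega
    obtain ⟨x, hxW⟩ := hWne
    have hxE : x ∉ W.erase x := Finset.notMem_erase x W
    have hWec : (W.erase x).card + 1 = U.card + V.card := by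
      rw [Finset.card_erase_of_mem hxW]
      have := Finset.card_pos.2 hUne; omega
    have hlt : (W.erase x).card < n := by
      rw [Finset.card_erase_of_mem hxW]
      have := Finset.card_pos.2 hUne; omega
    have hWx : W = insert x (W.erase x) := (Finset.insert_erase hxW).symm
    rw [hWx]
    refine step U V (W.erase x) x hxE hdisj hUne hVne hWec ?_ ?_
    · intro u hu
      have h := ih (W.erase x).card hlt (U.erase u) V (W.erase x)
        (hdisj.mono_left (Finset.erase_subset u U))
        (by rw [Finset.card_erase_of_mem hu, Finset.card_erase_of_mem hxW]
            have := Finset.card_pos.2 hUne; omega) rfl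
      rwa [Finset.card_erase_of_mem hu] at h
    · intro v hv
      exact ih (W.erase x).card hlt U (V.erase v) (W.erase x)
        (hdisj.mono_right (Finset.erase_subset v V))
        (by rw [Finset.card_erase_of_mem hv, Finset.card_erase_of_mem hxW]
            have := Finset.card_pos.2 hVne; omega) rfl

private lemma pF_eq (F : ℂ → ℂ → ℂ) {L1 L2 : List ℂ} (h1 : L1.Nodup) (h2 : L2.Nodup) :
    pF F L1 L2 = ∏ x ∈ L1.toFinset, ∏ y ∈ L2.toFinset, F x y := by
  rw [pF, ← List.prod_toFinset _ h1]
  exact Finset.prod_congr rfl fun x _ => (List.prod_toFinset _ h2).symm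

private lemma gg_prod (c : ℂ) (S T : Finset ℂ) :
    ∏ s ∈ S, ∏ t ∈ T, gG c s t = c ^ (S.card * T.card) * (dd S T)⁻¹ := by
  simp only [gG, div_eq_mul_inv, Finset.prod_mul_distrib, Finset.prod_inv_distrib,
    Finset.prod_const, dd]
  rw [← pow_mul, Nat.mul_comm]

/-- summation of Cauchy determinants, Lemma B.1:
`Σ g(w̄_α,ū)·g(w̄_ᾱ,v̄)·g(w̄_ᾱ,w̄_α) = g(w̄,ū)·g(w̄,v̄)/g(ū,v̄)`,
the sum running over all partitions of `w̄` into subsets of cardinalities `m1` and `m2`. -/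
theorem stmt0 (c : ℂ) (hc : c ≠ 0) (m1 m2 : ℕ) (U V W : List ℂ)
    (hU : U.length = m1) (hV : V.length = m2) (hW : W.length = m1 + m2)
    (hgen : (W ++ U ++ V).Pairwise (· ≠ ·)) :
    ∑ A ∈ Finset.powersetCard m1 (Finset.univ : Finset (Fin W.length)),
      pF (gG c) (subL W A) U * pF (gG c) (subL W Aᶜ) V * pF (gG c) (subL W Aᶜ) (subL W A)
      = pF (gG c) W U * pF (gG c) W V / pF (gG c) U V := by
  classical
  -- extract distinctness data
  rw [List.pairwise_append] at hgen
  obtain ⟨hWU, hVnd, hcross⟩ := hgen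
  rw [List.pairwise_append] at hWU
  obtain ⟨hWnd, hUnd, hWUc⟩ := hWU
  have hWnd' : W.Nodup := hWnd
  have hUnd' : U.Nodup := hUnd
  have hVnd' : V.Nodup := hVnd
  have hWVc : ∀ w ∈ W, ∀ v ∈ V, w ≠ v := fun w hw => hcross w (List.mem_append_left _ hw)
  have hUVc : ∀ u ∈ U, ∀ v ∈ V, u ≠ v := fun u hu => hcross u (List.mem_append_right _ hu)
  set Wf := W.toFinset with hWfdef
  set Uf := U.toFinset with hUfdef
  set Vf := V.toFinset with hVfdef
  have hWfc : Wf.card = m1 + m2 := by rw [hWfdef, List.toFinset_card_of_nodup hWnd', hW]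
  have hUfc : Uf.card = m1 := by rw [hUfdef, List.toFinset_card_of_nodup hUnd', hU]
  have hVfc : Vf.card = m2 := by rw [hVfdef, List.toFinset_card_of_nodup hVnd', hV]
  have hdisjUV : Disjoint Uf Vf := by
    rw [Finset.disjoint_left]
    intro a ha hb
    exact hUVc a (List.mem_toFinset.1 ha) a (List.mem_toFinset.1 hb) rfl
  have hget : Function.Injective W.get := List.nodup_iff_injective_get.1 hWnd'
  have hsubnd : ∀ A : Finset (Fin W.length), (subL W A).Nodup :=
    fun A => List.Nodup.map hget (Finset.sort_nodup A _)
  have hsubtf : ∀ A : Finset (Fin W.length), (subL W A).toFinset = A.image W.get := by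
    intro A
    ext y
    simp [subL, Finset.mem_sort, Finset.mem_image]
  have hcompl : ∀ A : Finset (Fin W.length),
      (Aᶜ : Finset (Fin W.length)).image W.get = Wf \ A.image W.get := by
    intro A
    ext y
    simp only [Finset.mem_image, Finset.mem_compl, Finset.mem_sdiff]
    constructor
    · rintro ⟨i, hiA, rfl⟩
      refine ⟨List.mem_toFinset.2 (W.get_mem i), ?_⟩
      rintro ⟨j, hjA, hji⟩
      exact hiA (hget hji ▸ hjA)
    · rintro ⟨hyW, hnot⟩
      obtain ⟨i, rfl⟩ := List.mem_iff_get.1 (List.mem_toFinset.1 hyW)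
      exact ⟨i, fun hiA => hnot ⟨i, hiA, rfl⟩, rfl⟩
  have hWfUf : dd Wf Uf ≠ 0 := dd_ne_zero fun b hb a ha =>
    hWUc b (List.mem_toFinset.1 hb) a (List.mem_toFinset.1 ha)
  have hWfVf : dd Wf Vf ≠ 0 := dd_ne_zero fun b hb a ha =>
    hWVc b (List.mem_toFinset.1 hb) a (List.mem_toFinset.1 ha)
  have hUfVf : dd Uf Vf ≠ 0 := dd_ne_zero fun b hb a ha =>
    hUVc b (List.mem_toFinset.1 hb) a (List.mem_toFinset.1 ha)
  -- per-term identification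
  have hterm : ∀ A ∈ Finset.powersetCard m1 (Finset.univ : Finset (Fin W.length)),
      pF (gG c) (subL W A) U * pF (gG c) (subL W Aᶜ) V * pF (gG c) (subL W Aᶜ) (subL W A)
        = sm Uf Vf Wf (A.image W.get) *
            (c ^ (m1 * m1 + m2 * m2 + m2 * m1) * (dd Wf Uf)⁻¹ * (dd Wf Vf)⁻¹) := by
    intro A hA
    have hAc : A.card = m1 := (Finset.mem_powersetCard.1 hA).2
    have hScard : (A.image W.get).card = m1 := by
      rw [Finset.card_image_of_injective _ hget, hAc]
    have hSsub : A.image W.get ⊆ Wf := by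
      intro y hy
      obtain ⟨i, _, rfl⟩ := Finset.mem_image.1 hy
      exact List.mem_toFinset.2 (W.get_mem i)
    have hTcard : (Wf \ A.image W.get).card = m2 := by
      rw [Finset.card_sdiff_of_subset hSsub, hScard, hWfc]; omega
    rw [pF_eq _ (hsubnd A) hUnd', pF_eq _ (hsubnd Aᶜ) hVnd',
      pF_eq _ (hsubnd Aᶜ) (hsubnd A), hsubtf, hsubtf, hcompl]
    rw [gg_prod, gg_prod, gg_prod, hScard, hTcard, hUfc, hVfc]
    have h1 : dd Wf Uf = dd (Wf \ A.image W.get) Uf * dd (A.image W.get) Uf := by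
      rw [dd, dd, dd]; exact (Finset.prod_sdiff hSsub).symm
    have h2 : dd Wf Vf = dd (Wf \ A.image W.get) Vf * dd (A.image W.get) Vf := by
      rw [dd, dd, dd]; exact (Finset.prod_sdiff hSsub).symm
    have hdSU : dd (A.image W.get) Uf ≠ 0 := dd_ne_zero fun b hb a ha =>
      hWUc b (List.mem_toFinset.1 (hSsub hb)) a (List.mem_toFinset.1 ha)
    have hdTU : dd (Wf \ A.image W.get) Uf ≠ 0 := dd_ne_zero fun b hb a ha =>
      hWUc b (List.mem_toFinset.1 (Finset.mem_sdiff.1 hb).1) a (List.mem_toFinset.1 ha)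
    have hdSV : dd (A.image W.get) Vf ≠ 0 := dd_ne_zero fun b hb a ha =>
      hWVc b (List.mem_toFinset.1 (hSsub hb)) a (List.mem_toFinset.1 ha)
    have hdTV : dd (Wf \ A.image W.get) Vf ≠ 0 := dd_ne_zero fun b hb a ha =>
      hWVc b (List.mem_toFinset.1 (Finset.mem_sdiff.1 hb).1) a (List.mem_toFinset.1 ha)
    have hdTS : dd (Wf \ A.image W.get) (A.image W.get) ≠ 0 := dd_ne_zero
      fun b hb a ha e => (Finset.mem_sdiff.1 hb).2 (e ▸ ha)
    rw [sm, ← dd_eq_prod_Qq, ← dd_eq_prod_Qq, h1, h2]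
    simp only [← hUfdef, ← hVfdef, ← hWfdef]
    field_simp
    ring
  rw [Finset.sum_congr rfl hterm]
  have hmain : ∑ A ∈ Finset.powersetCard m1 (Finset.univ : Finset (Fin W.length)),
      sm Uf Vf Wf (A.image W.get) *
        (c ^ (m1 * m1 + m2 * m2 + m2 * m1) * (dd Wf Uf)⁻¹ * (dd Wf Vf)⁻¹)
      = ∑ S ∈ Finset.powersetCard m1 Wf,
          sm Uf Vf Wf S * (c ^ (m1 * m1 + m2 * m2 + m2 * m1) * (dd Wf Uf)⁻¹ * (dd Wf Vf)⁻¹) := by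
    refine Finset.sum_bij (fun A _ => A.image W.get) ?_ ?_ ?_ ?_
    · intro A hA
      rw [Finset.mem_powersetCard]
      refine ⟨?_, ?_⟩
      · intro y hy
        obtain ⟨i, _, rfl⟩ := Finset.mem_image.1 hy
        exact List.mem_toFinset.2 (W.get_mem i)
      · rw [Finset.card_image_of_injective _ hget, (Finset.mem_powersetCard.1 hA).2]
    · intro A _ B _ h
      exact Finset.image_injective hget h
    · intro S hS
      obtain ⟨hSsub, hSc⟩ := Finset.mem_powersetCard.1 hS
      have himg : (Finset.univ.filter (fun i => W.get i ∈ S)).image W.get = S := by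
        ext y
        constructor
        · intro hy
          obtain ⟨i, hi, rfl⟩ := Finset.mem_image.1 hy
          exact (Finset.mem_filter.1 hi).2
        · intro hy
          obtain ⟨i, rfl⟩ := List.mem_iff_get.1 (List.mem_toFinset.1 (hSsub hy))
          exact Finset.mem_image.2 ⟨i, Finset.mem_filter.2 ⟨Finset.mem_univ _, hy⟩, rfl⟩
      refine ⟨Finset.univ.filter (fun i => W.get i ∈ S),
        Finset.mem_powersetCard.2 ⟨Finset.subset_univ _, ?_⟩, himg⟩
      have := Finset.card_image_of_injective
        (Finset.univ.filter (fun i => W.get i ∈ S)) hget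
      rw [himg, hSc] at this
      omega
    · intro A hA
      rfl
  rw [hmain, ← Finset.sum_mul]
  have hcore := core Wf.card Uf Vf Wf hdisjUV (by rw [hWfc, hUfc, hVfc]) rfl
  rw [hUfc] at hcore
  rw [hcore]
  rw [pF_eq _ hWnd' hUnd', pF_eq _ hWnd' hVnd', pF_eq _ hUnd' hVnd',
    gg_prod, gg_prod, gg_prod, hWfc, hUfc, hVfc]
  simp only [← hUfdef, ← hVfdef, ← hWfdef]
  field_simp
  ring
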